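/- Let R be a commutative Noetherian integral domain. Then the inclusion functor from the full subcategory of ModuleCat R consisting of finitely generated reflexive R-modules into the full subcategory of finitely generated R-modules admits a left adjoint (given on objects by bidualization M ↦ M^∨∨, with unit the evaluation map). -/

import Mathlib

set_option maxHeartbeats 1000000
open CategoryTheory Module

universe v u

variable {R : Type u} [CommRing R]

lemma finite_dual' [IsNoetherianRing R] (M : Type*) [AddCommGroup M] [Module R M]
    [Module.Finite R M] : Module.Finite R (Module.Dual R M) := by
  obtain ⟨n, f, hf⟩ := Module.Finite.exists_fin' R M
  exact Module.Finite.of_injective f.dualMap (f.dualMap_injective_of_surjective hf)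

lemma exists_smul_mem_range_eval' [IsDomain R] [IsNoetherianRing R]
    (M : Type*) [AddCommGroup M] [Module R M] [Module.Finite R M]
    (ξ : Module.Dual R (Module.Dual R M)) :
    ∃ r : R, r ≠ 0 ∧ r • ξ ∈ LinearMap.range (Module.Dual.eval R M) := by
  classical
  haveI : Module.FinitePresentation R M := Module.finitePresentation_of_finite R M
  haveI : Module.Finite R (Module.Dual R M) := finite_dual' M
  haveI : Module.FinitePresentation R (Module.Dual R M) :=
    Module.finitePresentation_of_finite R _
  set S := nonZeroDivisors R
  set K := FractionRing R
  set Mₛ := LocalizedModule S M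
  set fₘ : M →ₗ[R] Mₛ := LocalizedModule.mkLinearMap S M with hfₘ
  set g : R →ₗ[R] K := Algebra.linearMap R K with hg
  haveI : IsLocalizedModule S g := inferInstance
  set ψ₁ : Module.Dual R M →ₗ[R] (Mₛ →ₗ[K] K) :=
    IsLocalizedModule.mapExtendScalars S fₘ g K with hψ₁
  haveI : IsLocalizedModule S ψ₁ :=
    Module.FinitePresentation.isLocalizedModule_mapExtendScalars S fₘ g K
  set ψ₂ : Module.Dual R (Module.Dual R M) →ₗ[R] Module.Dual K (Module.Dual K Mₛ) :=
    IsLocalizedModule.mapExtendScalars S ψ₁ g K with hψ₂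
  haveI : IsLocalizedModule S ψ₂ :=
    Module.FinitePresentation.isLocalizedModule_mapExtendScalars S ψ₁ g K
  haveI : Module.Finite K Mₛ := Module.Finite.of_isLocalizedModule S fₘ
  have hψ₁app : ∀ (χ : Module.Dual R M) (m : M), (ψ₁ χ) (fₘ m) = g (χ m) := by
    intro χ m
    exact IsLocalizedModule.map_apply S fₘ g χ m
  have hψ₂app : ∀ (ζ : Module.Dual R (Module.Dual R M)) (χ : Module.Dual R M),
      (ψ₂ ζ) (ψ₁ χ) = g (ζ χ) := by
    intro ζ χ
    exact IsLocalizedModule.map_apply S ψ₁ g ζ χ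
  -- naturality : ψ₂ ∘ eval = eval ∘ fₘ
  have hnat : ∀ m : M, ψ₂ (Module.Dual.eval R M m) = Module.Dual.eval K Mₛ (fₘ m) := by
    intro m
    have := IsLocalizedModule.ext S ψ₁
      (IsLocalizedModule.map_units (f := g) (S := S))
      (j := (ψ₂ (Module.Dual.eval R M m)).restrictScalars R)
      (k := (Module.Dual.eval K Mₛ (fₘ m)).restrictScalars R) ?_
    · exact LinearMap.ext fun χ => LinearMap.congr_fun this χ
    · ext χ
      simp only [LinearMap.coe_comp, LinearMap.coe_restrictScalars, Function.comp_apply]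
      rw [hψ₂app]
      simp only [Module.Dual.eval_apply]
      rw [hψ₁app]
  obtain ⟨x, hx⟩ := (Module.bijective_dual_eval K Mₛ).2 (ψ₂ ξ)
  obtain ⟨⟨m, s⟩, hms⟩ := IsLocalizedModule.surj S fₘ x
  have h1 : ψ₂ ((s : R) • ξ) = ψ₂ (Module.Dual.eval R M m) := by
    rw [map_smul, hnat, ← hx, ← LinearMap.map_smul_of_tower, ← Submonoid.smul_def, hms]
  obtain ⟨c, hc⟩ := IsLocalizedModule.exists_of_eq (S := S) (f := ψ₂) h1
  refine ⟨(c : R) * (s : R), mul_ne_zero (nonZeroDivisors.ne_zero c.2)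
    (nonZeroDivisors.ne_zero s.2), ⟨(c : R) • m, ?_⟩⟩
  rw [Submonoid.smul_def, Submonoid.smul_def] at hc
  rw [map_smul, mul_smul]
  exact hc.symm

/-- evaluation into the double dual is injective on any dual module. -/
lemma eval_dual_injective' (M : Type*) [AddCommGroup M] [Module R M] :
    Function.Injective (Dual.eval R (Dual R M)) := by
  intro x y h
  ext m
  exact congrFun (congrArg DFunLike.coe h) (Dual.eval R M m)

/-- a map on the bidual vanishing on the image of evaluation is zero (target with
injective evaluation, over a Noetherian domain, source finite). -/
lemma comp_eval_eq_zero' [IsDomain R] [IsNoetherianRing R]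
    (M : Type*) [AddCommGroup M] [Module R M] [Module.Finite R M]
    {N : Type*} [AddCommGroup N] [Module R N]
    (hN : Function.Injective (Dual.eval R N))
    (g : Dual R (Dual R M) →ₗ[R] N) (h : g ∘ₗ Dual.eval R M = 0) : g = 0 := by
  ext ξ
  obtain ⟨r, hr, m, hm⟩ := exists_smul_mem_range_eval' M ξ
  have h1 : r • g ξ = 0 := by
    rw [← map_smul, ← hm]
    exact LinearMap.congr_fun h m
  have h2 : Dual.eval R N (g ξ) = 0 := by
    ext φ
    have : r * φ (g ξ) = 0 := by
      rw [← smul_eq_mul, ← map_smul, h1, map_zero]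
    simpa [hr] using mul_eq_zero.mp this
  exact hN (by simpa using h2)

lemma bidual_isReflexive' [IsDomain R] [IsNoetherianRing R]
    (M : Type*) [AddCommGroup M] [Module R M] [Module.Finite R M] :
    Module.IsReflexive R (Dual R (Dual R M)) := by
  constructor
  set Y := Dual R M
  haveI : Module.Finite R Y := finite_dual' M
  constructor
  · exact eval_dual_injective' Y
  · -- surjectivity via the retraction (eval Y).dualMap
    set rr : Dual R (Dual R (Dual R Y)) →ₗ[R] Dual R Y := (Dual.eval R Y).dualMap
    have hretr : ∀ χ : Dual R Y, rr (Dual.eval R (Dual R Y) χ) = χ := fun χ => rfl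
    have hrinj : Function.Injective rr := by
      rw [injective_iff_map_eq_zero]
      intro τ hτ
      have hτ' : (τ ∘ₗ Dual.eval R Y) = 0 := hτ
      exact comp_eval_eq_zero' Y (Module.bijective_dual_eval R R).injective τ hτ'
    intro ζ
    refine ⟨rr ζ, hrinj ?_⟩
    rw [hretr]

lemma dual_torsionfree' (Y : Type*) [AddCommGroup Y] [Module R Y] [IsDomain R]
    {r : R} (hr : r ≠ 0) {x : Dual R Y} (hx : r • x = 0) : x = 0 := by
  ext y
  have : r * x y = 0 := by
    rw [← smul_eq_mul, ← LinearMap.smul_apply, hx, LinearMap.zero_apply]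
  simpa [hr] using mul_eq_zero.mp this

lemma exists_smul_all_mem_range_eval' [IsDomain R] [IsNoetherianRing R]
    (M : Type v) [AddCommGroup M] [Module R M] [Module.Finite R M] :
    ∃ r : R, r ≠ 0 ∧ ∀ ξ : Dual R (Dual R M), r • ξ ∈ LinearMap.range (Dual.eval R M) := by
  haveI : Module.Finite R (Dual R M) := finite_dual' M
  haveI : Module.Finite R (Dual R (Dual R M)) := finite_dual' (Dual R M)
  obtain ⟨s, hs⟩ := Module.Finite.fg_top (R := R) (M := Dual R (Dual R M))
  classical
  have key : ∀ t : Finset (Dual R (Dual R M)), ∃ r : R, r ≠ 0 ∧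
      ∀ ξ ∈ t, r • ξ ∈ LinearMap.range (Dual.eval R M) := by
    intro t
    induction t using Finset.induction_on with
    | empty => exact ⟨1, one_ne_zero, by simp⟩
    | @insert ξ₀ t' hnot ih =>
      obtain ⟨r₁, hr₁, hr₁'⟩ := ih
      obtain ⟨r₀, hr₀, hr₀'⟩ := exists_smul_mem_range_eval' M ξ₀
      refine ⟨r₀ * r₁, mul_ne_zero hr₀ hr₁, ?_⟩
      intro ξ hξ
      rcases Finset.mem_insert.mp hξ with h | h
      · subst h
        rw [mul_comm, mul_smul]
        exact Submodule.smul_mem _ _ hr₀'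
      · rw [mul_smul]
        exact Submodule.smul_mem _ _ (hr₁' ξ h)
  obtain ⟨r, hr, hmem⟩ := key s
  refine ⟨r, hr, ?_⟩
  have : (⊤ : Submodule R (Dual R (Dual R M))) ≤
      (LinearMap.range (Dual.eval R M)).comap (LinearMap.lsmul R _ r) := by
    rw [← hs]
    refine Submodule.span_le.mpr ?_
    intro ξ hξ
    exact hmem ξ hξ
  intro ξ
  exact this Submodule.mem_top

lemma small_bidual' [IsDomain R] [IsNoetherianRing R]
    (M : Type v) [AddCommGroup M] [Module R M] [Module.Finite R M] :
    Small.{v} (Dual R (Dual R M)) := by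
  obtain ⟨r, hr, hmem⟩ := exists_smul_all_mem_range_eval' (R := R) M
  haveI : Small.{v} (LinearMap.range (Dual.eval R M)) :=
    small_of_surjective (Dual.eval R M).surjective_rangeRestrict
  refine small_of_injective (f := fun ξ : Dual R (Dual R M) =>
    (⟨r • ξ, hmem ξ⟩ : LinearMap.range (Dual.eval R M))) ?_
  intro ξ ξ' h
  have h' : r • (ξ - ξ') = 0 := by
    have := Subtype.ext_iff.mp h
    simp only at this
    rw [smul_sub, this, sub_self]
  have := dual_torsionfree' (Dual R M) hr h'
  exact sub_eq_zero.mp this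

/-- The property of a bundled `R`-module of being finitely generated and reflexive
(the evaluation map to the double dual is bijective). -/
def isFGReflexive (R : Type*) [CommRing R] (M : ModuleCat R) : Prop :=
  Module.Finite R M ∧ Function.Bijective (Module.Dual.eval R M)

section Functorial

variable (R : Type u) [CommRing R] [IsDomain R] [IsNoetherianRing R]

noncomputable def LFunctor :
    ObjectProperty.FullSubcategory (fun M : ModuleCat.{v} R => Module.Finite R M) ⥤
      ObjectProperty.FullSubcategory (isFGReflexive R) where
  obj M :=
    letI : Module.Finite R M.obj := M.property
    letI : Small.{v} (Dual R (Dual R M.obj)) := small_bidual' (R := R) M.obj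
    letI : Module.Finite R (Dual R M.obj) := finite_dual' M.obj
    letI : Module.Finite R (Dual R (Dual R M.obj)) := finite_dual' (Dual R M.obj)
    ⟨ModuleCat.of R (Shrink.{v} (Dual R (Dual R M.obj))),
      Module.Finite.equiv (Shrink.linearEquiv R (Dual R (Dual R M.obj))).symm,
      by
        haveI := bidual_isReflexive' (R := R) M.obj
        haveI := Module.equiv
          (Shrink.linearEquiv R (Dual R (Dual R M.obj))).symm
        exact Module.bijective_dual_eval R
          (Shrink.{v} (Dual R (Dual R M.obj)))⟩
  map {M N} f :=
    letI i₁ : Small.{v} (Dual R (Dual R M.obj)) :=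
      letI : Module.Finite R M.obj := M.property
      small_bidual' (R := R) M.obj
    letI i₂ : Small.{v} (Dual R (Dual R N.obj)) :=
      letI : Module.Finite R N.obj := N.property
      small_bidual' (R := R) N.obj
    ObjectProperty.homMk (ModuleCat.ofHom
      ((Shrink.linearEquiv R (Dual R (Dual R N.obj))).symm.toLinearMap ∘ₗ
      (f.hom.hom.dualMap.dualMap) ∘ₗ
      (Shrink.linearEquiv R (Dual R (Dual R M.obj))).symm.symm.toLinearMap : _ →ₗ[R] _))
  map_id M := by
    letI : Module.Finite R M.obj := M.property
    letI : Small.{v} (Dual R (Dual R M.obj)) := small_bidual' (R := R) M.obj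
    refine ObjectProperty.hom_ext _ (ModuleCat.hom_ext (LinearMap.ext fun x => ?_))
    show (Shrink.linearEquiv R _).symm ((LinearMap.id (M := M.obj)).dualMap.dualMap
      ((Shrink.linearEquiv R _).symm.symm x)) = x
    simp
  map_comp {M N P} f g := by
    letI : Module.Finite R M.obj := M.property
    letI : Small.{v} (Dual R (Dual R M.obj)) := small_bidual' (R := R) M.obj
    letI : Module.Finite R N.obj := N.property
    letI : Small.{v} (Dual R (Dual R N.obj)) := small_bidual' (R := R) N.obj
    letI : Module.Finite R P.obj := P.property
    letI : Small.{v} (Dual R (Dual R P.obj)) := small_bidual' (R := R) P.obj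
    refine ObjectProperty.hom_ext _ (ModuleCat.hom_ext (LinearMap.ext fun x => ?_))
    show (Shrink.linearEquiv R _).symm ((g.hom.hom.comp f.hom.hom).dualMap.dualMap
      ((Shrink.linearEquiv R _).symm.symm x)) = _
    show _ = (Shrink.linearEquiv R _).symm (g.hom.hom.dualMap.dualMap
      ((Shrink.linearEquiv R _).symm.symm ((Shrink.linearEquiv R _).symm (f.hom.hom.dualMap.dualMap
        ((Shrink.linearEquiv R _).symm.symm x)))))
    simp
    rfl

end Functorial

section Adj

variable (R : Type u) [CommRing R] [IsDomain R] [IsNoetherianRing R]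

/-- The unit: evaluation followed by the shrink equivalence. -/
noncomputable def etaMap (M : ModuleCat.{v} R) [Module.Finite R M]
    [Small.{v} (Dual R (Dual R M))] :
    M →ₗ[R] Shrink.{v} (Dual R (Dual R M)) :=
  (Shrink.linearEquiv R (Dual R (Dual R M))).symm.toLinearMap ∘ₗ Dual.eval R M

omit [IsDomain R] [IsNoetherianRing R] in
lemma dualMap_dualMap_eval {A B : Type*} [AddCommGroup A] [Module R A]
    [AddCommGroup B] [Module R B] (f : A →ₗ[R] B) (m : A) :
    f.dualMap.dualMap (Dual.eval R A m) = Dual.eval R B (f m) := rfl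

variable {R}

/-- forward map of the hom equivalence -/
noncomputable def homEquivBidual
    (M : ObjectProperty.FullSubcategory (fun M : ModuleCat.{v} R => Module.Finite R M))
    (Nr : ObjectProperty.FullSubcategory (isFGReflexive R)) :
    (((LFunctor R).obj M).obj ⟶ Nr.obj) ≃ (M.obj ⟶ Nr.obj) := by
  letI : Module.Finite R M.obj := M.property
  letI : Small.{v} (Dual R (Dual R M.obj)) := small_bidual' (R := R) M.obj
  refine Equiv.ofBijective (fun g => ModuleCat.ofHom (g.hom ∘ₗ etaMap R M.obj)) ⟨?_, ?_⟩
  · -- injectivity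
    intro g₁ g₂ h
    set e := (Shrink.linearEquiv R (Dual R (Dual R M.obj))).symm with he
    have hb : g₁.hom ∘ₗ etaMap R M.obj = g₂.hom ∘ₗ etaMap R M.obj :=
      congrArg ModuleCat.Hom.hom h
    have hz : ((g₁.hom - g₂.hom) ∘ₗ e.toLinearMap) ∘ₗ Dual.eval R M.obj = 0 := by
      refine LinearMap.ext fun m => ?_
      have := LinearMap.congr_fun hb m
      show g₁.hom (e (Dual.eval R M.obj m)) - g₂.hom (e (Dual.eval R M.obj m)) = 0
      exact sub_eq_zero.mpr this
    have hc := comp_eval_eq_zero' (R := R) M.obj Nr.property.2.injective _ hz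
    have hsub : (g₁.hom - g₂.hom) = 0 := by
      refine LinearMap.ext fun x => ?_
      have h2 := LinearMap.congr_fun hc (e.symm x)
      show (g₁.hom - g₂.hom) x = 0
      have h2' : (g₁.hom - g₂.hom) (e (e.symm x)) = 0 := h2
      have hex : e (e.symm x) = x := e.apply_symm_apply x
      exact hex ▸ h2'
    exact ModuleCat.hom_ext (sub_eq_zero.mp hsub)
  · -- surjectivity
    intro f
    set e := (Shrink.linearEquiv R (Dual R (Dual R M.obj))).symm with he
    set eN := LinearEquiv.ofBijective (Dual.eval R Nr.obj) Nr.property.2 with heN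
    refine ⟨ModuleCat.ofHom (eN.symm.toLinearMap ∘ₗ f.hom.dualMap.dualMap ∘ₗ
      e.symm.toLinearMap : _ →ₗ[R] _), ?_⟩
    refine ModuleCat.hom_ext (LinearMap.ext fun m => ?_)
    show eN.symm (f.hom.dualMap.dualMap (e.symm (etaMap R M.obj m))) = _
    have h1 : e.symm (etaMap R M.obj m) = Dual.eval R M.obj m := by
      simp [etaMap, he]
    rw [h1, dualMap_dualMap_eval]
    exact eN.symm_apply_apply _

/-- the hom equivalence at the level of full subcategories -/
noncomputable def homEquivFull
    (M : ObjectProperty.FullSubcategory (fun M : ModuleCat.{v} R => Module.Finite R M))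
    (Nr : ObjectProperty.FullSubcategory (isFGReflexive R)) :
    ((LFunctor R).obj M ⟶ Nr) ≃
      (M ⟶ (ObjectProperty.ιOfLE (P := isFGReflexive R)
        (P' := fun M : ModuleCat.{v} R => Module.Finite R M)
        (fun M (h : isFGReflexive R M) => h.1 :
          ∀ M : ModuleCat.{v} R, isFGReflexive R M → Module.Finite R M)).obj Nr) where
  toFun g := ObjectProperty.homMk (homEquivBidual M Nr g.hom)
  invFun f := ObjectProperty.homMk ((homEquivBidual M Nr).symm f.hom)
  left_inv g := by
    refine ObjectProperty.hom_ext _ ?_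
    exact (homEquivBidual M Nr).symm_apply_apply g.hom
  right_inv f := by
    refine ObjectProperty.hom_ext _ ?_
    exact (homEquivBidual M Nr).apply_symm_apply f.hom

variable (R) in
noncomputable def bidualAdj :
    LFunctor.{v, u} R ⊣ ObjectProperty.ιOfLE (P := isFGReflexive R)
        (P' := fun M : ModuleCat.{v} R => Module.Finite R M)
      (fun M (h : isFGReflexive R M) => h.1 :
        ∀ M : ModuleCat.{v} R, isFGReflexive R M → Module.Finite R M) := by
  refine Adjunction.mkOfHomEquiv
    { homEquiv := fun M Nr => homEquivFull M Nr,
      homEquiv_naturality_left_symm := ?_, homEquiv_naturality_right := ?_ }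
  · intro M' M Nr f g
    letI : Module.Finite R M.obj := M.property
    letI : Module.Finite R M'.obj := M'.property
    letI : Small.{v} (Dual R (Dual R M.obj)) := small_bidual' (R := R) M.obj
    letI : Small.{v} (Dual R (Dual R M'.obj)) := small_bidual' (R := R) M'.obj
    beta_reduce
    rw [Equiv.symm_apply_eq]
    have hnat : ((LFunctor R).map f).hom.hom ∘ₗ etaMap R M'.obj
        = etaMap R M.obj ∘ₗ f.hom.hom := by
      refine LinearMap.ext fun m => ?_
      show (Shrink.linearEquiv R _).symm (f.hom.hom.dualMap.dualMap
        ((Shrink.linearEquiv R _).symm.symm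
          ((Shrink.linearEquiv R _).symm (Dual.eval R M'.obj m)))) = _
      rw [LinearEquiv.symm_apply_apply, dualMap_dualMap_eval]
      rfl
    have h3 := (homEquivBidual M Nr).apply_symm_apply g.hom
    have h3' : ((homEquivBidual M Nr).symm g.hom).hom ∘ₗ etaMap R M.obj
        = g.hom.hom := congrArg ModuleCat.Hom.hom h3
    refine ObjectProperty.hom_ext _ (ModuleCat.hom_ext ?_)
    show (g.hom.hom ∘ₗ f.hom.hom : M'.obj →ₗ[R] Nr.obj) =
      ((homEquivBidual M Nr).symm g.hom).hom ∘ₗ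
        (((LFunctor R).map f).hom.hom ∘ₗ etaMap R M'.obj)
    rw [hnat]
    exact (congrArg (fun φ => φ ∘ₗ f.hom.hom) h3').symm
  · intro M Nr Nr' g h
    rfl

end Adj

/-- Over a commutative Noetherian integral domain `R`, the inclusion of the
full subcategory of finitely generated reflexive `R`-modules into the full subcategory of
finitely generated `R`-modules admits a left adjoint (bidualization). -/
theorem fgReflexive_inclusion_isRightAdjoint
    (R : Type*) [CommRing R] [IsDomain R] [IsNoetherianRing R] :
    (ObjectProperty.ιOfLE (P := isFGReflexive R) (P' := fun M : ModuleCat R => Module.Finite R M)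
        (fun M (h : isFGReflexive R M) => h.1 :
          ∀ M : ModuleCat R, isFGReflexive R M → Module.Finite R M)).IsRightAdjoint :=
  ⟨⟨LFunctor R, ⟨bidualAdj R⟩⟩⟩
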